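/- Let (a_n) be a sequence of natural numbers and S = {2^{-a_n} + Z : n ∈ N} ⊆ T. If a sequence of integers (l_j) converges to 0 in the topology τ_S of uniform convergence on S, then (l_j) converges to 0 in the 2-adic topology on Z; that is, for each n there exists j_n such that 2^{a_n} divides l_j for all j ≥ j_n. -/

import Mathlib

/-- `T_m = [-1/(4m), 1/(4m)] + ℤ` inside the circle `𝕋 = ℝ/ℤ`. -/
def Tm (m : ℕ) : Set (AddCircle (1 : ℝ)) :=
  {z | ∃ r : ℝ, |r| ≤ 1 / (4 * m) ∧ (r : AddCircle (1 : ℝ)) = z}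

/-- If a sequence of integers `(l_j)` converges to `0` in the topology `τ_S` of uniform
convergence on `S = {2^{-a_n} + ℤ}` (i.e. for every `m ≥ 1` eventually `l_j ∈ V_{S,m}`),
then it converges to `0` in the 2-adic topology: for each `n` eventually `2^{a_n} ∣ l_j`. -/
theorem tauS_conv_implies_two_adic_conv (a : ℕ → ℕ) (l : ℕ → ℤ)
    (hS : ∀ m : ℕ, 0 < m → ∃ J : ℕ, ∀ j ≥ J, ∀ n : ℕ,
      (((l j : ℝ) / 2 ^ a n : ℝ) : AddCircle (1 : ℝ)) ∈ Tm m) :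
    ∀ n : ℕ, ∃ J : ℕ, ∀ j ≥ J, (2 ^ a n : ℤ) ∣ l j := by
  intro n
  obtain ⟨J, hJ⟩ := hS (2 ^ a n) (by positivity)
  refine ⟨J, fun j hj => ?_⟩
  obtain ⟨r, hr, hre⟩ := hJ j hj n
  have hre' : r - (l j : ℝ) / 2 ^ a n ∈ AddSubgroup.zmultiples (1:ℝ) :=
    QuotientAddGroup.eq_iff_sub_mem.mp hre
  obtain ⟨k, hk⟩ := AddSubgroup.mem_zmultiples_iff.mp hre'
  simp only [zsmul_eq_mul, mul_one] at hk
  -- r - l j / 2^(a n) = k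
  have h2 : (0:ℝ) < 2 ^ a n := by positivity
  have hlj : ((l j : ℝ)) = 2 ^ a n * r - 2 ^ a n * k := by
    field_simp at hk
    linarith
  have habs : |((l j + 2 ^ a n * k : ℤ) : ℝ)| < 1 := by
    push_cast
    rw [hlj]
    have : |(2:ℝ) ^ a n * r| ≤ 1/4 := by
      rw [abs_mul, abs_of_pos h2]
      calc (2:ℝ) ^ a n * |r| ≤ 2 ^ a n * (1 / (4 * (2 ^ a n : ℕ))) := by
              apply mul_le_mul_of_nonneg_left hr h2.le
        _ = 1/4 := by push_cast; field_simp
    have heq : (2:ℝ) ^ a n * r - 2 ^ a n * k + 2 ^ a n * k = 2 ^ a n * r := by ring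
    rw [heq]
    linarith
  have habs' : |l j + 2 ^ a n * k| < 1 := by exact_mod_cast habs
  have h0 : l j + 2 ^ a n * k = 0 := Int.abs_lt_one_iff.mp habs'
  exact ⟨-k, by linarith⟩
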